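/- Let Kₙ be the complete graph on n vertices and 𝒜 = {a ∈ ℤ^n : a₁,…,a_{n-2} ∈ {0,…,n-1}, a_{n-1} = 0}. Then every d ∈ ℤ^n is equivalent modulo the image of the Laplacian of Kₙ to a unique a ∈ 𝒜, given by aⱼ = (dⱼ - d_{n-1}) mod n for j ≤ n-2, a_{n-1} = 0, and aₙ = deg(d) - a₁ - ⋯ - a_{n-2}. -/

import Mathlib

open scoped BigOperators

/-- degree of a divisor -/
def deg {n : ℕ} (d : Fin n → ℤ) : ℤ := ∑ i, d i

/-- initially zero: vanishes for all sufficiently small degree -/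
def InitiallyZero {n : ℕ} (f : (Fin n → ℤ) → ℤ) : Prop :=
  ∃ a : ℤ, ∀ d, deg d ≤ a → f d = 0

/-- indicator vector of a finite set of coordinates -/
def eI {n : ℕ} (I : Finset (Fin n)) : Fin n → ℤ := fun i => if i ∈ I then 1 else 0

/-- standard basis vector -/
def stdB {n : ℕ} (i : Fin n) : Fin n → ℤ := fun j => if j = i then 1 else 0

/-- the Möbius operator 𝔪 -/
def mob {n : ℕ} (f : (Fin n → ℤ) → ℤ) : (Fin n → ℤ) → ℤ :=
  fun d => ∑ I : Finset (Fin n), (-1) ^ I.card * f (d - eI I)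

/-- a modular function -/
def Modular {n : ℕ} (h : (Fin n → ℤ) → ℤ) : Prop := ∀ d, mob h d = 0

/-- L¹ distance (as a natural number) from `d` to the set `N` -/
noncomputable def distTo {n : ℕ} (N : Set (Fin n → ℤ)) (d : Fin n → ℤ) : ℕ :=
  sInf {k : ℕ | ∃ d' ∈ N, ∑ i, (d i - d' i).natAbs = k}

/-- equivalence modulo the image of the Laplacian of the complete graph Kₙ:
the Laplacian sends `x` to `fun i => n * x i - ∑ j, x j`. -/
def lapEquiv (n : ℕ) (d d' : Fin n → ℤ) : Prop :=
  ∃ x : Fin n → ℤ, ∀ i, d i - d' i = (n : ℤ) * x i - ∑ j, x j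

/-- divisors of Kₙ not equivalent to an effective divisor -/
def NKn (n : ℕ) : Set (Fin n → ℤ) :=
  {d | ¬ ∃ d' : Fin n → ℤ, (∀ i, 0 ≤ d' i) ∧ lapEquiv n d d'}

/-- the Baker–Norine rank of the complete graph Kₙ -/
noncomputable def rBN (n : ℕ) (d : Fin n → ℤ) : ℤ :=
  (distTo (NKn n) d : ℤ) - 1

section Aux

variable {n : ℕ}

lemma aux_filter_eq (hn : 2 ≤ n) :
    Finset.univ.filter (fun i : Fin n => (i : ℕ) < n - 2) = Finset.Iio ⟨n - 2, Nat.sub_lt_self (by norm_num) hn⟩ := by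
  ext i; simp [Finset.mem_Iio, Fin.lt_def]

lemma aux_card (hn : 2 ≤ n) :
    (Finset.univ.filter (fun i : Fin n => (i : ℕ) < n - 2)).card = n - 2 := by
  rw [aux_filter_eq hn, Fin.card_Iio]

lemma aux_split (hn : 2 ≤ n) (f : Fin n → ℤ) :
    ∑ i, f i = (∑ i ∈ Finset.univ.filter (fun i : Fin n => (i : ℕ) < n - 2), f i)
      + f ⟨n - 2, Nat.sub_lt_self (by norm_num) hn⟩ + f ⟨n - 1, by omega⟩ := by
  rw [← Finset.sum_filter_add_sum_filter_not Finset.univ (fun i : Fin n => (i : ℕ) < n - 2)]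
  have h : Finset.univ.filter (fun i : Fin n => ¬ (i : ℕ) < n - 2)
      = {(⟨n - 2, Nat.sub_lt_self (by norm_num) hn⟩ : Fin n), ⟨n - 1, by omega⟩} := by
    ext i
    simp only [Finset.mem_filter, Finset.mem_univ, true_and, Finset.mem_insert,
      Finset.mem_singleton, not_lt]
    constructor
    · intro hi
      have := i.isLt
      rcases Nat.lt_or_ge (i : ℕ) (n - 1) with h1 | h1
      · left; exact Fin.ext (by simp only [Fin.val_mk]; omega)
      · right; exact Fin.ext (by simp only [Fin.val_mk]; omega)
    · rintro (rfl | rfl) <;> simp only [Fin.val_mk] <;> omega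
  rw [h, Finset.sum_pair (Fin.ne_of_val_ne (by simp only [Fin.val_mk]; omega))]
  ring

end Aux

set_option maxHeartbeats 1000000 in
theorem stmt17 {n : ℕ} (hn : 2 ≤ n) (d : Fin n → ℤ) :
    letI a₀ : Fin n → ℤ := fun j =>
      if (j : ℕ) < n - 2 then (d j - d ⟨n - 2, by omega⟩) % n
      else if (j : ℕ) = n - 2 then 0
      else deg d - ∑ i ∈ Finset.univ.filter (fun i : Fin n => (i : ℕ) < n - 2),
        (d i - d ⟨n - 2, by omega⟩) % n
    ((∀ j : Fin n, (j : ℕ) < n - 2 → 0 ≤ a₀ j ∧ a₀ j ≤ (n : ℤ) - 1) ∧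
      a₀ ⟨n - 2, by omega⟩ = 0 ∧ lapEquiv n d a₀) ∧
    (∀ a : Fin n → ℤ,
      (∀ j : Fin n, (j : ℕ) < n - 2 → 0 ≤ a j ∧ a j ≤ (n : ℤ) - 1) →
      a ⟨n - 2, by omega⟩ = 0 → lapEquiv n d a → a = a₀) := by
  set a₀ : Fin n → ℤ := fun j =>
      if (j : ℕ) < n - 2 then (d j - d ⟨n - 2, by omega⟩) % n
      else if (j : ℕ) = n - 2 then 0
      else deg d - ∑ i ∈ Finset.univ.filter (fun i : Fin n => (i : ℕ) < n - 2),
        (d i - d ⟨n - 2, by omega⟩) % n with ha₀def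
  have hnz : (n : ℤ) ≠ 0 := by positivity
  have hn0 : (0:ℤ) < (n:ℤ) := by positivity
  set m : Fin n := ⟨n - 2, by omega⟩ with hm
  set l : Fin n := ⟨n - 1, by omega⟩ with hl
  set F := Finset.univ.filter (fun i : Fin n => (i : ℕ) < n - 2) with hF
  have hml : (m : ℕ) = n - 2 := rfl
  have hll : (l : ℕ) = n - 1 := rfl
  have hmne : (m:ℕ) ≠ n - 1 := by omega
  -- values of a₀
  have ha₀lt : ∀ j : Fin n, (j : ℕ) < n - 2 → a₀ j = (d j - d m) % n := by
    intro j hj; simp only [a₀, if_pos hj]; rfl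
  have ha₀m : a₀ m = 0 := by
    simp only [a₀]; rw [if_neg (by omega)]; simp [hml]
  have ha₀l : a₀ l = deg d - ∑ i ∈ F, (d i - d m) % n := by
    simp only [a₀]; rw [if_neg (by omega), if_neg (by omega)]
  have hmemF : ∀ i : Fin n, i ∈ F ↔ (i : ℕ) < n - 2 := by
    intro i; simp [hF]
  -- degrees equal under lapEquiv
  have hdeg : ∀ d' a : Fin n → ℤ, lapEquiv n d' a → deg d' = deg a := by
    rintro d' a ⟨x, hx⟩
    have : deg d' - deg a = 0 := by
      have : deg d' - deg a = ∑ i, (d' i - a i) := by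
        simp [deg, Finset.sum_sub_distrib]
      rw [this]
      calc ∑ i, (d' i - a i) = ∑ i : Fin n, ((n:ℤ) * x i - ∑ j, x j) := by
            exact Finset.sum_congr rfl fun i _ => hx i
        _ = (n:ℤ) * ∑ i, x i - n * ∑ j, x j := by
            simp only [Finset.sum_sub_distrib, Finset.sum_const, Finset.card_univ,
              Fintype.card_fin, nsmul_eq_mul, Finset.mul_sum]
        _ = 0 := by ring
    omega
  -- existence
  have hbounds : ∀ j : Fin n, (j : ℕ) < n - 2 → 0 ≤ a₀ j ∧ a₀ j ≤ (n : ℤ) - 1 := by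
    intro j hj
    rw [ha₀lt j hj]
    constructor
    · exact Int.emod_nonneg _ hnz
    · have := Int.emod_lt_of_pos (d j - d m) hn0
      omega
  have hequiv : lapEquiv n d a₀ := by
    refine ⟨fun j => if (j : ℕ) < n - 2 then (d j - d m) / n
      else if (j : ℕ) = n - 2 then 0
      else - d m - ∑ i ∈ F, (d i - d m) / n, ?_⟩
    set x : Fin n → ℤ := fun j => if (j : ℕ) < n - 2 then (d j - d m) / n
      else if (j : ℕ) = n - 2 then 0
      else - d m - ∑ i ∈ F, (d i - d m) / n with hx
    have hxF : ∀ i ∈ F, x i = (d i - d m) / n := by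
      intro i hi; rw [hmemF] at hi; simp only [x, if_pos hi]
    have hxm : x m = 0 := by simp only [x]; rw [if_neg (by omega)]; simp [hml]
    have hxl : x l = - d m - ∑ i ∈ F, (d i - d m) / n := by
      simp only [x]; rw [if_neg (by omega), if_neg (by omega)]
    have hS : ∑ j, x j = - d m := by
      rw [aux_split hn x, ← hF, ← hm, ← hl, hxm, hxl,
        Finset.sum_congr rfl hxF]
      ring
    intro i
    rw [hS]
    rcases Nat.lt_or_ge (i : ℕ) (n - 2) with hi | hi
    · rw [ha₀lt i hi]
      have hxi : x i = (d i - d m) / n := hxF i ((hmemF i).2 hi)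
      rw [hxi]
      have := Int.emod_add_mul_ediv (d i - d m) n
      omega
    · rcases Nat.lt_or_ge (i : ℕ) (n - 1) with hi2 | hi2
      · have : i = m := Fin.ext (by omega)
        subst this
        rw [ha₀m, hxm]; ring
      · have : i = l := Fin.ext (by have := i.isLt; omega)
        subst this
        rw [ha₀l, hxl]
        -- d l - (deg d - ∑ emod) = n * (-d m - ∑ ediv) + d m
        have hdsplit : deg d = (∑ i ∈ F, d i) + d m + d l := by
          rw [deg, aux_split hn d, ← hF, ← hm, ← hl]
        have hmodsum : ∑ i ∈ F, (d i - d m) % n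
            = (∑ i ∈ F, d i) - (n - 2 : ℕ) * d m - n * ∑ i ∈ F, (d i - d m) / n := by
          have : ∀ i ∈ F, (d i - d m) % n = (d i - d m) - n * ((d i - d m) / n) := by
            intro i _; rw [Int.emod_def]
          have hcard : F.card = n - 2 := by rw [hF]; exact aux_card hn
          rw [Finset.sum_congr rfl this, Finset.sum_sub_distrib, Finset.sum_sub_distrib,
            Finset.sum_const, hcard, ← Finset.mul_sum, nsmul_eq_mul]
        rw [hdsplit, hmodsum]
        have hcast : ((n - 2 : ℕ) : ℤ) = (n : ℤ) - 2 := by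
          have : (2:ℕ) ≤ n := hn; push_cast [this]; ring
        rw [hcast]
        ring
  refine ⟨⟨hbounds, ha₀m, hequiv⟩, ?_⟩
  -- uniqueness
  intro a hab ham haeq
  obtain ⟨x, hx⟩ := haeq
  obtain ⟨x', hx'⟩ := hequiv
  -- a i - a₀ i = n * (x' i - x i) - (S' - S)
  have key : ∀ i, a i - a₀ i = (n:ℤ) * (x' i - x i) - ((∑ j, x' j) - ∑ j, x j) := by
    intro i
    have h1 := hx i
    have h2 := hx' i
    have : a i - a₀ i = (d i - a₀ i) - (d i - a i) := by ring
    rw [this, h1, h2]; ring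
  -- at m: 0 = n * y m - T, so T = n * y m
  have hTm : (∑ j, x' j) - ∑ j, x j = (n:ℤ) * (x' m - x m) := by
    have := key m; rw [ham, ha₀m] at this; omega
  have hmod : ∀ i, a i - a₀ i = (n:ℤ) * ((x' i - x i) - (x' m - x m)) := by
    intro i
    have := key i
    rw [hTm] at this
    rw [this]; ring
  funext i
  rcases Nat.lt_or_ge (i : ℕ) (n - 2) with hi | hi
  · have hb1 := hab i hi
    have hb2 := hbounds i hi
    have := hmod i
    set k := (x' i - x i) - (x' m - x m) with hk
    have hk0 : k = 0 := by
      rcases lt_trichotomy k 0 with h | h | h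
      · nlinarith [hb1.1, hb1.2, hb2.1, hb2.2]
      · exact h
      · nlinarith [hb1.1, hb1.2, hb2.1, hb2.2]
    rw [hk0] at this
    omega
  · rcases Nat.lt_or_ge (i : ℕ) (n - 1) with hi2 | hi2
    · have : i = m := Fin.ext (by omega)
      subst this; rw [ham, ha₀m]
    · have : i = l := Fin.ext (by have := i.isLt; omega)
      subst this
      -- degrees equal and all other coordinates equal
      have hda : deg d = deg a := hdeg d a ⟨x, hx⟩
      have hda₀ : deg d = deg a₀ := hdeg d a₀ ⟨x', hx'⟩
      have hFa : ∀ i ∈ F, a i = a₀ i := by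
        intro i hiF
        rw [hmemF] at hiF
        have hb1 := hab i hiF
        have hb2 := hbounds i hiF
        have := hmod i
        set k := (x' i - x i) - (x' m - x m) with hk
        have hk0 : k = 0 := by
          rcases lt_trichotomy k 0 with h | h | h
          · nlinarith [hb1.1, hb1.2, hb2.1, hb2.2]
          · exact h
          · nlinarith [hb1.1, hb1.2, hb2.1, hb2.2]
        rw [hk0] at this
        omega
      have h1 : deg a = (∑ i ∈ F, a i) + a m + a l := by
        rw [deg, aux_split hn a, ← hF, ← hm, ← hl]
      have h2 : deg a₀ = (∑ i ∈ F, a₀ i) + a₀ m + a₀ l := by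
        rw [deg, aux_split hn a₀, ← hF, ← hm, ← hl]
      have h3 : ∑ i ∈ F, a i = ∑ i ∈ F, a₀ i := Finset.sum_congr rfl hFa
      omega
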